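/- For any d×d real positive semi-definite symmetric matrix A and any d×d real singular symmetric matrix B such that A + B is also positive semi-definite, the function t ↦ (det(A + tB))^(1/(d-1)) is concave on the interval [0,1]. -/

import Mathlib

open Matrix
open scoped MatrixOrder
set_option linter.unusedSectionVars false
set_option maxHeartbeats 1000000


private lemma geom_superadd {ι : Type*} [Fintype ι] [Nonempty ι] (μ : ι → ℝ)
    (hμ : ∀ i, 0 ≤ μ i) :
    1 + (∏ i, μ i) ^ ((Fintype.card ι : ℝ)⁻¹) ≤ (∏ i, (1 + μ i)) ^ ((Fintype.card ι : ℝ)⁻¹) := by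
  set n := Fintype.card ι with hn
  have hn0 : 0 < n := Fintype.card_pos
  set r : ℝ := (n : ℝ)⁻¹ with hr
  have hrpos : 0 < r := by positivity
  have h1μ : ∀ i, 0 < 1 + μ i := fun i => by linarith [hμ i]
  have hw : ∑ _i : ι, r = 1 := by
    rw [Finset.sum_const, Finset.card_univ, ← hn, nsmul_eq_mul, hr,
      mul_inv_cancel₀ (by exact_mod_cast hn0.ne')]
  have amgm1 : ∏ i, ((1 + μ i)⁻¹) ^ r ≤ ∑ i, r * (1 + μ i)⁻¹ :=
    Real.geom_mean_le_arith_mean_weighted Finset.univ (fun _ => r) (fun i => (1 + μ i)⁻¹)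
      (fun _ _ => hrpos.le) hw (fun i _ => inv_nonneg.mpr (h1μ i).le)
  have amgm2 : ∏ i, (μ i * (1 + μ i)⁻¹) ^ r ≤ ∑ i, r * (μ i * (1 + μ i)⁻¹) :=
    Real.geom_mean_le_arith_mean_weighted Finset.univ (fun _ => r) (fun i => μ i * (1 + μ i)⁻¹)
      (fun _ _ => hrpos.le) hw
      (fun i _ => mul_nonneg (hμ i) (inv_nonneg.mpr (h1μ i).le))
  have hsum : (∑ i, r * (1 + μ i)⁻¹) + (∑ i, r * (μ i * (1 + μ i)⁻¹)) = 1 := by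
    rw [← Finset.sum_add_distrib]
    calc ∑ i, (r * (1 + μ i)⁻¹ + r * (μ i * (1 + μ i)⁻¹)) = ∑ _i : ι, r := by
          refine Finset.sum_congr rfl fun i _ => ?_
          have hne := (h1μ i).ne'
          have h2 : (1 + μ i)⁻¹ + μ i * (1 + μ i)⁻¹ = 1 := by field_simp
          rw [← mul_add, h2, mul_one]
      _ = 1 := hw
  set Q : ℝ := (∏ i, (1 + μ i)) ^ r with hQ
  have hQpos : 0 < Q := Real.rpow_pos_of_pos (Finset.prod_pos fun i _ => h1μ i) r
  have hprod1 : ∏ i, ((1 + μ i)⁻¹) ^ r = Q⁻¹ := by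
    rw [hQ, ← Real.finset_prod_rpow _ _ (fun i _ => (h1μ i).le) r, ← Finset.prod_inv_distrib]
    exact Finset.prod_congr rfl fun i _ => Real.inv_rpow (h1μ i).le r
  have hprod2 : ∏ i, (μ i * (1 + μ i)⁻¹) ^ r = (∏ i, μ i) ^ r * Q⁻¹ := by
    rw [hQ, ← Real.finset_prod_rpow _ _ (fun i _ => hμ i) r,
      ← Real.finset_prod_rpow _ _ (fun i _ => (h1μ i).le) r, ← Finset.prod_inv_distrib,
      ← Finset.prod_mul_distrib]
    exact Finset.prod_congr rfl fun i _ => by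
      rw [Real.mul_rpow (hμ i) (inv_nonneg.mpr (h1μ i).le), Real.inv_rpow (h1μ i).le]
  have hQle : Q⁻¹ + (∏ i, μ i) ^ r * Q⁻¹ ≤ 1 := by
    calc Q⁻¹ + (∏ i, μ i) ^ r * Q⁻¹
        = (∏ i, ((1 + μ i)⁻¹) ^ r) + (∏ i, (μ i * (1 + μ i)⁻¹) ^ r) := by rw [hprod1, hprod2]
      _ ≤ _ := add_le_add amgm1 amgm2
      _ = 1 := hsum
  have hfin := mul_le_mul_of_nonneg_right hQle hQpos.le
  rw [add_mul, inv_mul_cancel₀ hQpos.ne', one_mul, mul_assoc, inv_mul_cancel₀ hQpos.ne',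
    mul_one] at hfin
  linarith

variable {ι : Type*} [Fintype ι] [DecidableEq ι]

private lemma psd_det_nonneg {X : Matrix ι ι ℝ} (hX : X.PosSemidef) : 0 ≤ X.det := by
  rw [hX.1.det_eq_prod_eigenvalues]
  exact Finset.prod_nonneg fun i _ => by simpa using hX.eigenvalues_nonneg i

omit [DecidableEq ι] in
private lemma psd_smul {c : ℝ} {X : Matrix ι ι ℝ} (hc : 0 ≤ c) (hX : X.PosSemidef) :
    (c • X).PosSemidef := by
  refine .of_dotProduct_mulVec_nonneg ?_ fun x => ?_
  · unfold Matrix.IsHermitian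
    rw [conjTranspose_smul, hX.1]
    simp
  · rw [smul_mulVec, dotProduct_smul, smul_eq_mul]
    exact mul_nonneg hc (hX.dotProduct_mulVec_nonneg x)

private lemma psd_diag_nonneg {X : Matrix ι ι ℝ} (hX : X.PosSemidef) (i : ι) : 0 ≤ X i i := by
  simpa using hX.dotProduct_mulVec_nonneg (Pi.single i 1)

private lemma herm_symm {S : Matrix ι ι ℝ} (hS : S.IsHermitian) (a b : ι) : S a b = S b a := by
  conv_lhs => rw [← hS]
  simp [conjTranspose_apply]

private lemma psd_col_zero {X : Matrix ι ι ℝ} (hX : X.PosSemidef) (i : ι) (h : X i i = 0)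
    (j : ι) : X j i = 0 := by
  set S := CFC.sqrt X with hS
  have hSH : S.IsHermitian := (Matrix.nonneg_iff_posSemidef.mp (CFC.sqrt_nonneg X)).1
  have hSS : S * S = X := CFC.sqrt_mul_sqrt_self X hX.nonneg
  have hcol : ∀ k, S k i = 0 := by
    have h0 : ∑ k, S k i * S k i = 0 := by
      have h1 : (S * S) i i = 0 := by rw [hSS]; exact h
      rw [mul_apply] at h1
      calc ∑ k, S k i * S k i = ∑ k, S i k * S k i :=
            Finset.sum_congr rfl fun k _ => by rw [herm_symm hSH k i]
        _ = 0 := h1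
    intro k
    have := (Finset.sum_eq_zero_iff_of_nonneg (fun k _ => mul_self_nonneg (S k i))).mp h0 k
      (Finset.mem_univ k)
    exact mul_self_eq_zero.mp this
  have : X j i = (S * S) j i := by rw [hSS]
  rw [this, mul_apply]
  exact Finset.sum_eq_zero fun k _ => by rw [hcol k, mul_zero]

private lemma psd_posdef_of_det_ne_zero {X : Matrix ι ι ℝ} (hX : X.PosSemidef)
    (h : X.det ≠ 0) : X.PosDef := by
  refine .of_dotProduct_mulVec_pos hX.1 fun x hx => ?_
  rcases lt_or_eq_of_le (hX.dotProduct_mulVec_nonneg x) with hlt | heq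
  · exact hlt
  · exfalso
    set S := CFC.sqrt X with hS
    have hSH : S.IsHermitian := (Matrix.nonneg_iff_posSemidef.mp (CFC.sqrt_nonneg X)).1
    have hSS : S * S = X := CFC.sqrt_mul_sqrt_self X hX.nonneg
    have key : star (S *ᵥ x) ⬝ᵥ (S *ᵥ x) = star x ⬝ᵥ X *ᵥ x := by
      rw [star_mulVec, ← dotProduct_mulVec, mulVec_mulVec, hSH.eq, hSS]
    have hSx : S *ᵥ x = 0 := dotProduct_star_self_eq_zero.mp (key.trans heq.symm)
    have hXx : X *ᵥ x = 0 := by rw [← hSS, ← mulVec_mulVec, hSx, mulVec_zero]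
    exact hx (eq_zero_of_mulVec_eq_zero h hXx)

private lemma det_one_add_psd {M : Matrix ι ι ℝ} (hM : M.PosSemidef) :
    (1 + M).det = ∏ i, (1 + hM.1.eigenvalues i) := by
  have hs := hM.1.spectral_theorem
  rw [Unitary.conjStarAlgAut_apply] at hs
  set U : Matrix ι ι ℝ := (hM.1.eigenvectorUnitary : Matrix ι ι ℝ) with hU
  have hUU : U * star U = 1 := Matrix.mem_unitaryGroup_iff.mp hM.1.eigenvectorUnitary.2
  have h1 : (1 : Matrix ι ι ℝ) + M
      = U * (diagonal (fun i => 1 + hM.1.eigenvalues i)) * star U := by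
    calc (1 : Matrix ι ι ℝ) + M
        = U * 1 * star U + U * diagonal (RCLike.ofReal ∘ hM.1.eigenvalues) * star U := by
          rw [Matrix.mul_one, hUU, ← hs]
      _ = U * (1 + diagonal (RCLike.ofReal ∘ hM.1.eigenvalues)) * star U := by
          rw [Matrix.mul_add, Matrix.add_mul, Matrix.mul_one]
      _ = _ := by
          congr 1
          congr 1
          rw [← Matrix.diagonal_one, diagonal_add]
          rfl
  rw [h1, Matrix.det_mul_right_comm, hUU, Matrix.one_mul, det_diagonal]

private lemma minkowski_posdef {X Y : Matrix ι ι ℝ} [Nonempty ι] (hX : X.PosDef)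
    (hY : Y.PosSemidef) :
    X.det ^ ((Fintype.card ι : ℝ)⁻¹) + Y.det ^ ((Fintype.card ι : ℝ)⁻¹)
      ≤ (X + Y).det ^ ((Fintype.card ι : ℝ)⁻¹) := by
  set r : ℝ := (Fintype.card ι : ℝ)⁻¹ with hr
  have hXdet : 0 < X.det := hX.det_pos
  set S : Matrix ι ι ℝ := CFC.sqrt X with hSdef
  have hSpsd : S.PosSemidef := Matrix.nonneg_iff_posSemidef.mp (CFC.sqrt_nonneg X)
  have hSH : S.IsHermitian := hSpsd.1
  have hSS : S * S = X := CFC.sqrt_mul_sqrt_self X hX.posSemidef.nonneg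
  have hSdet : S.det ≠ 0 := by
    intro h0
    rw [← hSS, det_mul, h0, mul_zero] at hXdet
    exact lt_irrefl _ hXdet
  have hSinv : S⁻¹ * S = 1 := nonsing_inv_mul S (isUnit_iff_ne_zero.mpr hSdet)
  have hSinv' : S * S⁻¹ = 1 := mul_nonsing_inv S (isUnit_iff_ne_zero.mpr hSdet)
  have hSinvH : (S⁻¹)ᴴ = S⁻¹ := by rw [conjTranspose_nonsing_inv, hSH.eq]
  set M : Matrix ι ι ℝ := S⁻¹ * Y * S⁻¹ with hMdef
  have hMpsd : M.PosSemidef := by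
    have := hY.conjTranspose_mul_mul_same (B := S⁻¹)
    rwa [hSinvH] at this
  have hXY : X + Y = S * (1 + M) * S := by
    rw [Matrix.mul_add, Matrix.add_mul, Matrix.mul_one, hSS, hMdef]
    congr 1
    symm
    calc S * (S⁻¹ * Y * S⁻¹) * S = (S * S⁻¹) * Y * (S⁻¹ * S) := by
          simp only [Matrix.mul_assoc]
      _ = Y := by rw [hSinv, hSinv', Matrix.mul_one, Matrix.one_mul]
  have hdetXY : (X + Y).det = X.det * (1 + M).det := by
    rw [hXY, det_mul, det_mul, mul_comm S.det, mul_assoc, ← det_mul, hSS]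
    ring
  have hdetM : X.det * M.det = Y.det := by
    rw [hMdef, det_mul, det_mul, det_nonsing_inv, Ring.inverse_eq_inv']
    rw [← hSS, det_mul]
    field_simp
  set μ := hMpsd.1.eigenvalues with hμdef
  have hμ : ∀ i, 0 ≤ μ i := hMpsd.eigenvalues_nonneg
  have hMdet : M.det = ∏ i, μ i := by
    have := hMpsd.1.det_eq_prod_eigenvalues
    simpa using this
  have h1M : (1 + M).det = ∏ i, (1 + μ i) := det_one_add_psd hMpsd
  have hgeom := geom_superadd μ hμ
  rw [← hMdet, ← h1M, ← hr] at hgeom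
  have hXr : (0:ℝ) < X.det ^ r := Real.rpow_pos_of_pos hXdet r
  calc X.det ^ r + Y.det ^ r
      = X.det ^ r * (1 + M.det ^ r) := by
        rw [mul_add, mul_one, ← Real.mul_rpow hXdet.le (hMdet ▸ Finset.prod_nonneg fun i _ => hμ i),
          hdetM]
    _ ≤ X.det ^ r * (1 + M).det ^ r := by
        apply mul_le_mul_of_nonneg_left hgeom hXr.le
    _ = (X + Y).det ^ r := by
        have h1Mnn : 0 ≤ (1 + M).det := by
          rw [h1M]
          exact Finset.prod_nonneg fun i _ => by linarith [hμ i]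
        rw [hdetXY, Real.mul_rpow hXdet.le h1Mnn]

private lemma minkowski {X Y : Matrix ι ι ℝ} [Nonempty ι] (hX : X.PosSemidef)
    (hY : Y.PosSemidef) :
    X.det ^ ((Fintype.card ι : ℝ)⁻¹) + Y.det ^ ((Fintype.card ι : ℝ)⁻¹)
      ≤ (X + Y).det ^ ((Fintype.card ι : ℝ)⁻¹) := by
  have hr0 : ((Fintype.card ι : ℝ)⁻¹) ≠ 0 := by
    have : 0 < Fintype.card ι := Fintype.card_pos
    positivity
  by_cases hx : X.det = 0
  · by_cases hy : Y.det = 0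
    · rw [hx, hy, Real.zero_rpow hr0, add_zero]
      exact Real.rpow_nonneg (psd_det_nonneg (hX.add hY)) _
    · have h := minkowski_posdef (psd_posdef_of_det_ne_zero hY hy) hX
      rw [add_comm Y X] at h
      linarith
  · exact minkowski_posdef (psd_posdef_of_det_ne_zero hX hx) hY

private lemma key_blocks {m : Type*} [Fintype m] [DecidableEq m] [Nonempty m]
    (Y D : Matrix (m ⊕ Unit) (m ⊕ Unit) ℝ) (hY : Y.PosSemidef) (hYD : (Y + D).PosSemidef)
    (hD12 : ∀ i, D (Sum.inl i) (Sum.inr ()) = 0) (hD21 : ∀ i, D (Sum.inr ()) i = 0)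
    {a b : ℝ} (ha : 0 ≤ a) (hb : 0 ≤ b) (hab : a + b = 1) :
    a * (Y + D).det ^ ((Fintype.card m : ℝ)⁻¹) + b * Y.det ^ ((Fintype.card m : ℝ)⁻¹)
      ≤ (Y + a • D).det ^ ((Fintype.card m : ℝ)⁻¹) := by
  set r : ℝ := (Fintype.card m : ℝ)⁻¹ with hr
  have hcard : (0:ℝ) < (Fintype.card m : ℝ) := by exact_mod_cast Fintype.card_pos
  have hr0 : r ≠ 0 := by positivity
  set α := Y (Sum.inr ()) (Sum.inr ()) with hα
  have hα0 : 0 ≤ α := psd_diag_nonneg hY _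
  rcases eq_or_lt_of_le hα0 with hzero | hpos
  · -- degenerate case : last column of everything is zero
    have hYcol : ∀ j, Y j (Sum.inr ()) = 0 := psd_col_zero hY _ hzero.symm
    have hDcol : ∀ j, D j (Sum.inr ()) = 0 := by
      rintro (i | ⟨⟩)
      · exact hD12 i
      · exact hD21 _
    have h1 : (Y + D).det = 0 :=
      det_eq_zero_of_column_eq_zero (Sum.inr ()) fun j => by
        simp [Matrix.add_apply, hYcol j, hDcol j]
    have h2 : Y.det = 0 := det_eq_zero_of_column_eq_zero (Sum.inr ()) fun j => hYcol j
    have h3 : (Y + a • D).det = 0 :=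
      det_eq_zero_of_column_eq_zero (Sum.inr ()) fun j => by
        simp [Matrix.add_apply, Matrix.smul_apply, hYcol j, hDcol j]
    rw [h1, h2, h3, Real.zero_rpow hr0]
    simp
  · -- main case
    set Y₁ := Y.toBlocks₁₁ with hY₁
    set y := Y.toBlocks₁₂ with hy
    set D₁ := D.toBlocks₁₁ with hD₁
    set W := Y.toBlocks₂₂ with hW
    have hWdet : W.det = α := by
      rw [det_unique]
      rfl
    have hWunit : IsUnit W.det := by rw [hWdet]; exact isUnit_iff_ne_zero.mpr hpos.ne'
    have : Invertible W := invertibleOfIsUnitDet W hWunit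
    have hWh : W.IsHermitian := by
      ext i j
      simp only [conjTranspose_apply, RCLike.star_def, starRingEnd_apply, star_trivial]
    have hWpd : W.PosDef := by
      refine .of_dotProduct_mulVec_pos hWh fun x hx => ?_
      have hx0 : x () ≠ 0 := by
        intro h0
        exact hx (funext fun u => by cases u; exact h0)
      have hcalc : star x ⬝ᵥ W *ᵥ x = α * (x () * x ()) := by
        simp [dotProduct, Matrix.mulVec, Fintype.sum_unique, hW, toBlocks₂₂]
        ring
      rw [hcalc]
      exact mul_pos hpos (mul_self_pos.mpr hx0)
    have hblocks : ∀ c : ℝ, Y + c • D = fromBlocks (Y₁ + c • D₁) y yᴴ W := by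
      intro c
      ext (i | ⟨⟩) (j | ⟨⟩)
      · simp [fromBlocks, hY₁, hD₁, toBlocks₁₁]
      · simp [fromBlocks, hy, toBlocks₁₂, hD12 i]
      · simp [fromBlocks, conjTranspose_apply, hy, toBlocks₁₂, hD21 (Sum.inl j)]
        exact herm_symm hY.1 _ _
      · simp [fromBlocks, hW, toBlocks₂₂, hD21 (Sum.inr ())]
    have hblocks1 : Y + D = fromBlocks (Y₁ + D₁) y yᴴ W := by
      have := hblocks 1
      rwa [one_smul, one_smul] at this
    have hblocks0 : Y = fromBlocks Y₁ y yᴴ W := by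
      have := hblocks 0
      rwa [zero_smul, add_zero, zero_smul, add_zero] at this
    set Cm := Y₁ - y * W⁻¹ * yᴴ with hCm
    have hdet : ∀ P : Matrix m m ℝ,
        (fromBlocks P y yᴴ W).det = α * (P - y * W⁻¹ * yᴴ).det := by
      intro P
      rw [det_fromBlocks₂₂, hWdet, invOf_eq_nonsing_inv]
    have hC : Cm.PosSemidef := by
      have h1 : (fromBlocks Y₁ y yᴴ W).PosSemidef := hblocks0 ▸ hY
      exact (PosDef.fromBlocks₂₂ _ _ hWpd).mp h1
    have hC1 : (Cm + D₁).PosSemidef := by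
      have h1 : (fromBlocks (Y₁ + D₁) y yᴴ W).PosSemidef := hblocks1 ▸ hYD
      have h2 := (PosDef.fromBlocks₂₂ _ _ hWpd).mp h1
      have h3 : Y₁ + D₁ - y * W⁻¹ * yᴴ = Cm + D₁ := by
        rw [hCm]; abel
      rwa [h3] at h2
    have hdetY : Y.det = α * Cm.det := by rw [hblocks0, hdet]
    have hdetYD : (Y + D).det = α * (Cm + D₁).det := by
      rw [hblocks1, hdet]
      congr 1
      rw [hCm]
      abel
    have hdetYa : (Y + a • D).det = α * (Cm + a • D₁).det := by
      rw [hblocks a, hdet]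
      congr 1
      rw [hCm]
      abel
    -- Minkowski in dimension m
    have hbC : (b • Cm).PosSemidef := psd_smul hb hC
    have haC : (a • (Cm + D₁)).PosSemidef := psd_smul ha hC1
    have hsumC : b • Cm + a • (Cm + D₁) = Cm + a • D₁ := by
      rw [smul_add, ← add_assoc, ← add_smul]
      rw [add_comm b a, hab, one_smul]
    have hmink := minkowski hbC haC
    rw [hsumC] at hmink
    have hn1 : (Fintype.card m : ℝ) * r = 1 := mul_inv_cancel₀ hcard.ne'
    have hsmul_rpow : ∀ (c : ℝ), 0 ≤ c → ∀ (Z : Matrix m m ℝ), 0 ≤ Z.det →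
        (c • Z).det ^ r = c * Z.det ^ r := by
      intro c hc Z hZ
      rw [det_smul, Real.mul_rpow (pow_nonneg hc _) hZ, ← Real.rpow_natCast c,
        ← Real.rpow_mul hc, hn1, Real.rpow_one]
    rw [hsmul_rpow b hb Cm (psd_det_nonneg hC), hsmul_rpow a ha _ (psd_det_nonneg hC1)] at hmink
    -- multiply by α ^ r
    have hαr : (0:ℝ) < α ^ r := Real.rpow_pos_of_pos hpos r
    have hgoal := mul_le_mul_of_nonneg_left hmink hαr.le
    rw [hdetY, hdetYD, hdetYa]
    rw [Real.mul_rpow hα0 (psd_det_nonneg hC), Real.mul_rpow hα0 (psd_det_nonneg hC1),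
      Real.mul_rpow hα0 (psd_det_nonneg (hsumC ▸ hbC.add haC))]
    nlinarith [hgoal]

private lemma master {n : ℕ} (hn : n ≠ 0) {X Y : Matrix (Fin (n+1)) (Fin (n+1)) ℝ}
    (hX : X.PosSemidef) (hY : Y.PosSemidef) (v : Fin (n+1) → ℝ) (hv : v ≠ 0)
    (hXYv : X *ᵥ v = Y *ᵥ v) {a b : ℝ} (ha : 0 ≤ a) (hb : 0 ≤ b) (hab : a + b = 1) :
    a * X.det ^ ((n:ℝ)⁻¹) + b * Y.det ^ ((n:ℝ)⁻¹) ≤ (a • X + b • Y).det ^ ((n:ℝ)⁻¹) := by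
  haveI : Nonempty (Fin n) := ⟨⟨0, Nat.pos_of_ne_zero hn⟩⟩
  obtain ⟨j, hj⟩ : ∃ j, v j ≠ 0 := Function.ne_iff.mp hv
  set P : Matrix (Fin (n+1)) (Fin (n+1)) ℝ :=
    1 + vecMulVec (v - Pi.single j 1) (Pi.single j 1) with hP
  have hPdet : P.det = v j := by
    rw [hP, vecMulVec_eq Unit, det_one_add_replicateCol_mul_replicateRow, single_dotProduct]
    simp
  have hPv : P *ᵥ Pi.single j 1 = v := by
    ext i
    rw [hP, add_mulVec, mulVec_single]
    simp [vecMulVec_apply, Matrix.one_apply, Pi.single_apply]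
  set X' : Matrix (Fin (n+1)) (Fin (n+1)) ℝ := Pᴴ * X * P with hX'def
  set Y' : Matrix (Fin (n+1)) (Fin (n+1)) ℝ := Pᴴ * Y * P with hY'def
  have hX' : X'.PosSemidef := hX.conjTranspose_mul_mul_same P
  have hY' : Y'.PosSemidef := hY.conjTranspose_mul_mul_same P
  have hcol : ∀ i, X' i j = Y' i j := by
    have h1 : X' *ᵥ Pi.single j 1 = Y' *ᵥ Pi.single j 1 := by
      rw [hX'def, hY'def, ← mulVec_mulVec, ← mulVec_mulVec, hPv, ← mulVec_mulVec,
        ← mulVec_mulVec, hPv, hXYv]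
    intro i
    have := congrFun h1 i
    simpa using this
  have hrow : ∀ i, X' j i = Y' j i := by
    intro i
    rw [herm_symm hX'.1 j i, herm_symm hY'.1 j i]
    exact hcol i
  -- reindex so that j becomes the distinguished index
  set e : (Fin n ⊕ Unit) ≃ Fin (n+1) :=
    ((Equiv.sumCongr (Equiv.refl (Fin n)) (Equiv.ofUnique Unit (Fin 1))).trans
      finSumFinEquiv).trans (Equiv.swap (Fin.last n) j) with he
  have hej : e (Sum.inr ()) = j := by
    have h0 : finSumFinEquiv (Sum.inr ((Equiv.ofUnique Unit (Fin 1)) ())) = Fin.last n := by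
      rw [finSumFinEquiv_apply_right]
      ext
      simp [Fin.natAdd, Fin.last]
    rw [he]
    simp only [Equiv.trans_apply, Equiv.sumCongr_apply, Sum.map_inr]
    rw [h0, Equiv.swap_apply_left]
  have hsub_add : ∀ (Z W : Matrix (Fin (n+1)) (Fin (n+1)) ℝ),
      (Z + W).submatrix e e = Z.submatrix e e + W.submatrix e e := fun Z W => congrFun (congrFun (submatrix_add Z W) e) e
  have hsub_smul : ∀ (c : ℝ) (Z : Matrix (Fin (n+1)) (Fin (n+1)) ℝ),
      (c • Z).submatrix e e = c • Z.submatrix e e := fun c Z => congrFun (congrFun (submatrix_smul c Z) e) e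
  have hX'' : (X'.submatrix e e).PosSemidef := hX'.submatrix e
  have hY'' : (Y'.submatrix e e).PosSemidef := hY'.submatrix e
  have hYDX : Y' + (X' - Y') = X' := by abel
  have hYD'' : (Y'.submatrix e e + ((X' - Y').submatrix e e)).PosSemidef := by
    rw [← hsub_add, hYDX]
    exact hX''
  have hD12 : ∀ i, (X' - Y').submatrix e e (Sum.inl i) (Sum.inr ()) = 0 := by
    intro i
    simp only [submatrix_apply, Matrix.sub_apply, hej]
    rw [hcol (e (Sum.inl i))]
    ring
  have hD21 : ∀ i, (X' - Y').submatrix e e (Sum.inr ()) i = 0 := by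
    intro i
    simp only [submatrix_apply, Matrix.sub_apply, hej]
    rw [hrow (e i)]
    ring
  have hkey := key_blocks (Y'.submatrix e e) ((X' - Y').submatrix e e) hY'' hYD'' hD12 hD21
    ha hb hab
  rw [show ((Fintype.card (Fin n) : ℝ))⁻¹ = ((n:ℝ))⁻¹ by simp, ← hsub_add, hYDX] at hkey
  have hcomb : Y'.submatrix e e + a • (X' - Y').submatrix e e
      = (a • X' + b • Y').submatrix e e := by
    have h3 : Y' + a • (X' - Y') = a • X' + b • Y' := by
      have hb' : b = 1 - a := by linarith
      rw [smul_sub, hb']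
      ext i k
      simp only [Matrix.add_apply, Matrix.sub_apply, Matrix.smul_apply, smul_eq_mul]
      ring
    rw [← hsub_smul, ← hsub_add, h3]
  rw [hcomb] at hkey
  -- move from the primed matrices back to the original ones
  have hdetP : P.det ≠ 0 := by rw [hPdet]; exact hj
  set c : ℝ := P.det ^ 2 with hc
  have hcpos : (0:ℝ) < c := by positivity
  have hdet' : ∀ Z : Matrix (Fin (n+1)) (Fin (n+1)) ℝ, (Pᴴ * Z * P).det = c * Z.det := by
    intro Z
    rw [det_mul, det_mul, det_conjTranspose, star_trivial, hc]
    ring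
  have hXdet : (X'.submatrix e e).det = c * X.det := by
    rw [det_submatrix_equiv_self, hX'def, hdet']
  have hYdet : (Y'.submatrix e e).det = c * Y.det := by
    rw [det_submatrix_equiv_self, hY'def, hdet']
  have hcombdet : ((a • X' + b • Y').submatrix e e).det = c * (a • X + b • Y).det := by
    rw [det_submatrix_equiv_self]
    have h2 : a • X' + b • Y' = Pᴴ * (a • X + b • Y) * P := by
      simp only [hX'def, hY'def, mul_add, add_mul, mul_smul_comm, smul_mul_assoc]
    rw [h2, hdet']
  rw [hXdet, hYdet, hcombdet] at hkey
  -- cancel the factor c ^ r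
  have hXdn : 0 ≤ X.det := psd_det_nonneg hX
  have hYdn : 0 ≤ Y.det := psd_det_nonneg hY
  have hCdn : 0 ≤ (a • X + b • Y).det := psd_det_nonneg ((psd_smul ha hX).add (psd_smul hb hY))
  rw [Real.mul_rpow hcpos.le hXdn, Real.mul_rpow hcpos.le hYdn, Real.mul_rpow hcpos.le hCdn]
    at hkey
  have hcr : (0:ℝ) < c ^ ((n:ℝ)⁻¹) := Real.rpow_pos_of_pos hcpos _
  rw [show a * (c ^ ((n:ℝ)⁻¹) * X.det ^ ((n:ℝ)⁻¹)) + b * (c ^ ((n:ℝ)⁻¹) * Y.det ^ ((n:ℝ)⁻¹))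
      = c ^ ((n:ℝ)⁻¹) * (a * X.det ^ ((n:ℝ)⁻¹) + b * Y.det ^ ((n:ℝ)⁻¹)) from by ring] at hkey
  exact le_of_mul_le_mul_left hkey hcr


theorem stmt0 (d : ℕ) (hd : 2 ≤ d)
    (A B : Matrix (Fin d) (Fin d) ℝ)
    (hA : A.PosSemidef) (hBsymm : B.IsSymm) (hBsing : B.det = 0)
    (hAB : (A + B).PosSemidef) :
    ConcaveOn ℝ (Set.Icc (0:ℝ) 1)
      (fun t : ℝ => (A + t • B).det ^ ((1 : ℝ) / (d - 1))) := by
  obtain ⟨n, rfl⟩ : ∃ n, d = n + 1 := ⟨d - 1, by omega⟩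
  have hn : n ≠ 0 := by omega
  have hexp : (1 : ℝ) / (((n+1 : ℕ) : ℝ) - 1) = ((n:ℝ))⁻¹ := by
    push_cast
    rw [add_sub_cancel_right]
    exact one_div _
  obtain ⟨v, hv, hBv⟩ : ∃ v, v ≠ 0 ∧ B *ᵥ v = 0 := by
    obtain ⟨v, hv, hBv⟩ := (Matrix.exists_mulVec_eq_zero_iff (M := B)).mpr hBsing
    exact ⟨v, hv, hBv⟩
  have hpsd : ∀ u : ℝ, u ∈ Set.Icc (0:ℝ) 1 → (A + u • B).PosSemidef := by
    intro u hu
    have h1 : A + u • B = (1 - u) • A + u • (A + B) := by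
      ext i k
      simp only [Matrix.add_apply, Matrix.smul_apply, smul_eq_mul]
      ring
    rw [h1]
    exact (psd_smul (by linarith [hu.2]) hA).add (psd_smul hu.1 hAB)
  constructor
  · exact convex_Icc 0 1
  · intro s hs t ht a b ha hb hab
    have hXv : (A + s • B) *ᵥ v = (A + t • B) *ᵥ v := by
      simp [add_mulVec, smul_mulVec, hBv]
    have hmain := master hn (hpsd s hs) (hpsd t ht) v hv hXv ha hb hab
    have hcomb : a • (A + s • B) + b • (A + t • B) = A + (a * s + b * t) • B := by
      ext i k
      simp only [Matrix.add_apply, Matrix.smul_apply, smul_eq_mul]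
      linear_combination (A i k) * hab
    rw [hcomb] at hmain
    simp only [smul_eq_mul, hexp]
    exact hmain
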